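/- arXiv:1102.5633 — 3 statements merged into one kernel-verified Lean document; each statement's English description precedes it below -/
import Mathlib

section
/- Let X, X_1, …, X_n be i.i.d. random vectors uniformly distributed on [0,1]^d, and for each point x let X_{1,x},…,X_{n,x} denote X_1,…,X_n rearranged in ascending order of distance to x (ties broken by index). Then for any γ > 0 there exists a constant c_1 > 0, depending only on γ and d, such that for all n and all 1 ≤ k ≤ n, (1/k) · E[ Σ_{i=1}^k ‖X_{i,X} − X‖^{2γ} ] ≤ c_1 · (k/n)^{2γ/d}. -/
open MeasureTheory Finset

/-- The unit cube `[0,1]^d` in `ℝ^d`. -/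
def unitCube (d : ℕ) : Set (EuclideanSpace ℝ (Fin d)) :=
  WithLp.ofLp ⁻¹' (Set.univ.pi fun _ => Set.Icc (0 : ℝ) 1)

/-- The permutation rearranging `X 0, …, X (n-1)` in ascending order of distance to `x`,
with ties broken by index: `X (nnPerm x X 0)` is the nearest neighbor of `x`, etc. -/
noncomputable def nnPerm {d n : ℕ} (x : EuclideanSpace ℝ (Fin d))
    (X : Fin n → EuclideanSpace ℝ (Fin d)) : Equiv.Perm (Fin n) :=
  Tuple.sort (fun i => toLex (‖X i - x‖, i))

/-- The indices `{0, …, k-1}` as a finset of `Fin n`. -/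
def firstK (n k : ℕ) : Finset (Fin n) := Finset.univ.filter fun i => (i : ℕ) < k

noncomputable section KnnAux

lemma euclid_volume_pi_Icc {d : ℕ} (a b : Fin d → ℝ) :
    (volume : Measure (EuclideanSpace ℝ (Fin d)))
        (WithLp.ofLp ⁻¹' (Set.univ.pi fun j => Set.Icc (a j) (b j)))
      = ∏ j, ENNReal.ofReal (b j - a j) := by
  have h := (EuclideanSpace.volume_preserving_symm_measurableEquiv_toLp (Fin d)).measure_preimage
    (s := Set.univ.pi fun j => Set.Icc (a j) (b j))
    ((MeasurableSet.univ_pi fun j => measurableSet_Icc).nullMeasurableSet)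
  rw [volume_pi_pi] at h
  simp only [Real.volume_Icc] at h
  exact h

lemma volume_unitCube {d : ℕ} : (volume : Measure (EuclideanSpace ℝ (Fin d))) (unitCube d) = 1 := by
  have h := euclid_volume_pi_Icc (d := d) (fun _ => 0) (fun _ => 1)
  simp only [sub_zero, ENNReal.ofReal_one, prod_const, one_pow] at h
  exact h

lemma measurableSet_unitCube {d : ℕ} : MeasurableSet (unitCube d) :=
  (MeasurableSet.univ_pi fun _ => measurableSet_Icc).preimage (WithLp.measurable_ofLp _ _)

instance (d : ℕ) : IsProbabilityMeasure ((volume : Measure (EuclideanSpace ℝ (Fin d))).restrict (unitCube d)) := by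
  constructor
  rw [Measure.restrict_apply MeasurableSet.univ, Set.univ_inter, volume_unitCube]


lemma norm_le_sqrt_of_mem_cube {d : ℕ} {x y : EuclideanSpace ℝ (Fin d)}
    (hx : x ∈ unitCube d) (hy : y ∈ unitCube d) : ‖y - x‖ ≤ Real.sqrt d := by
  rw [EuclideanSpace.norm_eq]
  have h1 : ∑ j, ‖(y - x) j‖ ^ 2 ≤ (d : ℝ) := by
    calc ∑ j, ‖(y - x) j‖ ^ 2 ≤ ∑ _j : Fin d, (1:ℝ) := by
          apply Finset.sum_le_sum
          intro j _
          have hxj := hx j (Set.mem_univ j)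
          have hyj := hy j (Set.mem_univ j)
          simp only [Set.mem_Icc] at hxj hyj
          have hb : ‖(y - x) j‖ ≤ 1 := by
            simp only [PiLp.sub_apply, Real.norm_eq_abs]
            rw [abs_le]; constructor <;> nlinarith [hxj.1, hxj.2, hyj.1, hyj.2]
          calc ‖(y - x) j‖ ^ 2 ≤ 1 ^ 2 := by
                exact pow_le_pow_left₀ (norm_nonneg _) hb 2
            _ = 1 := one_pow 2
      _ = (d : ℝ) := by simp
  exact Real.sqrt_le_sqrt h1

lemma box_volume_le {d : ℕ} {x : EuclideanSpace ℝ (Fin d)} {r s : ℝ}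
    (hx : x ∈ unitCube d) (hr0 : 0 < r) (hr1 : r ≤ 1) (hrs : Real.sqrt d * r ≤ s) :
    ENNReal.ofReal (r ^ d)
      ≤ (volume : Measure (EuclideanSpace ℝ (Fin d))).restrict (unitCube d)
          {y | ‖y - x‖ ≤ s} := by
  classical
  set a : Fin d → ℝ := fun j => min (x j) (1 - r) with ha
  have hmem : ∀ j, x j ∈ Set.Icc (0:ℝ) 1 := fun j => hx j (Set.mem_univ j)
  set B : Set (EuclideanSpace ℝ (Fin d)) := WithLp.ofLp ⁻¹' (Set.univ.pi fun j => Set.Icc (a j) (a j + r))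
    with hB
  have hBcube : B ⊆ unitCube d := by
    intro y hy j _
    have hyj := hy j (Set.mem_univ j)
    have hxj := hmem j
    simp only [Set.mem_Icc] at *
    constructor
    · have : 0 ≤ a j := le_min hxj.1 (by linarith)
      linarith [hyj.1]
    · have : a j + r ≤ 1 := by
        have : a j ≤ 1 - r := min_le_right _ _
        linarith
      linarith [hyj.2]
  have hBball : B ⊆ {y | ‖y - x‖ ≤ s} := by
    intro y hy
    have hcoord : ∀ j, ‖(y - x) j‖ ≤ r := by
      intro j
      have hyj := hy j (Set.mem_univ j)
      have hxj := hmem j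
      simp only [Set.mem_Icc] at hyj hxj
      have hax : a j ≤ x j := min_le_left _ _
      have hxa : x j ≤ a j + r := by
        rcases le_total (x j) (1 - r) with h | h
        · have : a j = x j := min_eq_left h
          linarith
        · have : a j = 1 - r := min_eq_right h
          linarith [hxj.2]
      simp only [PiLp.sub_apply, Real.norm_eq_abs]
      rw [abs_le]; constructor <;> linarith [hyj.1, hyj.2]
    have : ‖y - x‖ ≤ Real.sqrt d * r := by
      rw [EuclideanSpace.norm_eq]
      have h1 : ∑ j, ‖(y - x) j‖ ^ 2 ≤ (d : ℝ) * r ^ 2 := by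
        calc ∑ j, ‖(y - x) j‖ ^ 2 ≤ ∑ _j : Fin d, r ^ 2 := by
              apply Finset.sum_le_sum
              intro j _
              exact pow_le_pow_left₀ (norm_nonneg _) (hcoord j) 2
          _ = (d : ℝ) * r ^ 2 := by simp [mul_comm]
      calc Real.sqrt (∑ j, ‖(y - x) j‖ ^ 2) ≤ Real.sqrt ((d:ℝ) * r ^ 2) :=
            Real.sqrt_le_sqrt h1
        _ = Real.sqrt d * r := by
            rw [Real.sqrt_mul (Nat.cast_nonneg d), Real.sqrt_sq hr0.le]
    exact this.trans hrs
  have hmeas : MeasurableSet {y : EuclideanSpace ℝ (Fin d) | ‖y - x‖ ≤ s} := by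
    have : Continuous fun y : EuclideanSpace ℝ (Fin d) => ‖y - x‖ :=
      (continuous_id.sub continuous_const).norm
    exact (isClosed_le this continuous_const).measurableSet
  rw [Measure.restrict_apply hmeas]
  have hBsub : B ⊆ {y | ‖y - x‖ ≤ s} ∩ unitCube d := Set.subset_inter hBball hBcube
  refine le_trans ?_ (measure_mono hBsub)
  have : (volume : Measure (EuclideanSpace ℝ (Fin d))) B
      = ∏ _j : Fin d, ENNReal.ofReal r := by
    rw [hB, euclid_volume_pi_Icc]
    simp
  rw [this]
  simp only [prod_const, card_univ, Fintype.card_fin]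
  rw [← ENNReal.ofReal_pow hr0.le]


lemma tail_prob {d n : ℕ} (hd : 0 < d) {x : EuclideanSpace ℝ (Fin d)}
    (hx : x ∈ unitCube d) {s : ℝ} (hs : 0 < s) (S : Finset (Fin n)) :
    Measure.pi (fun _ : Fin n => (volume : Measure (EuclideanSpace ℝ (Fin d))).restrict (unitCube d))
        {X | ∀ i ∈ S, s < ‖X i - x‖}
      ≤ ENNReal.ofReal (Real.exp (-(S.card * (min (s / (2 * Real.sqrt d)) 1) ^ d))) := by
  classical
  set μ := (volume : Measure (EuclideanSpace ℝ (Fin d))).restrict (unitCube d) with hμ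
  set r : ℝ := min (s / (2 * Real.sqrt d)) 1 with hr
  have hsd : (0:ℝ) < Real.sqrt d := Real.sqrt_pos.2 (by exact_mod_cast hd)
  have hr0 : 0 < r := lt_min (by positivity) one_pos
  have hr1 : r ≤ 1 := min_le_right _ _
  have hrs : Real.sqrt d * r ≤ s := by
    have h1 : Real.sqrt d * r ≤ Real.sqrt d * (s / (2 * Real.sqrt d)) :=
      mul_le_mul_of_nonneg_left (min_le_left _ _) hsd.le
    have h2 : Real.sqrt d * (s / (2 * Real.sqrt d)) = s / 2 := by
      field_simp
    nlinarith
  have hbox := box_volume_le hx hr0 hr1 hrs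
  set A : Set (EuclideanSpace ℝ (Fin d)) := {y | s < ‖y - x‖} with hA
  have hcont : Continuous fun y : EuclideanSpace ℝ (Fin d) => ‖y - x‖ :=
    (continuous_id.sub continuous_const).norm
  have hBmeas : MeasurableSet {y : EuclideanSpace ℝ (Fin d) | ‖y - x‖ ≤ s} :=
    (isClosed_le hcont continuous_const).measurableSet
  have hAcompl : A = {y : EuclideanSpace ℝ (Fin d) | ‖y - x‖ ≤ s}ᶜ := by
    ext y; simp [hA, not_le]
  have hμA : μ A ≤ ENNReal.ofReal (Real.exp (-(r ^ d))) := by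
    rw [hAcompl, measure_compl hBmeas (measure_ne_top _ _)]
    have huniv : μ Set.univ = 1 := measure_univ
    rw [huniv]
    calc 1 - μ {y | ‖y - x‖ ≤ s} ≤ 1 - ENNReal.ofReal (r ^ d) :=
          tsub_le_tsub_left hbox 1
      _ = ENNReal.ofReal (1 - r ^ d) := by
          rw [ENNReal.ofReal_sub _ (by positivity), ENNReal.ofReal_one]
      _ ≤ ENNReal.ofReal (Real.exp (-(r ^ d))) := by
          apply ENNReal.ofReal_le_ofReal
          linarith [Real.add_one_le_exp (-(r ^ d))]
  have hev : {X : Fin n → EuclideanSpace ℝ (Fin d) | ∀ i ∈ S, s < ‖X i - x‖}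
      = Set.univ.pi fun i => if i ∈ S then A else Set.univ := by
    ext X
    simp only [Set.mem_setOf_eq, Set.mem_pi, Set.mem_univ, forall_true_left]
    constructor
    · intro h i
      by_cases hi : i ∈ S
      · simpa [hi, hA] using h i hi
      · simp [hi]
    · intro h i hi
      have := h i
      simp [hi, hA] at this
      exact this
  rw [hev, Measure.pi_pi]
  have hprod : (∏ i : Fin n, μ (if i ∈ S then A else Set.univ)) = μ A ^ S.card := by
    calc (∏ i : Fin n, μ (if i ∈ S then A else Set.univ))
        = ∏ i : Fin n, (if i ∈ S then μ A else 1) := by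
          apply Finset.prod_congr rfl
          intro i _
          by_cases hi : i ∈ S <;> simp [hi]
      _ = ∏ i ∈ S, μ A := by rw [Finset.prod_ite_mem, Finset.univ_inter]
      _ = μ A ^ S.card := Finset.prod_const _
  rw [hprod]
  calc μ A ^ S.card ≤ ENNReal.ofReal (Real.exp (-(r ^ d))) ^ S.card :=
        pow_le_pow_left' hμA _
    _ = ENNReal.ofReal (Real.exp (-(r ^ d)) ^ S.card) := by
        rw [ENNReal.ofReal_pow (Real.exp_nonneg _)]
    _ = ENNReal.ofReal (Real.exp (-(S.card * r ^ d))) := by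
        rw [← Real.exp_nat_mul]
        ring_nf


lemma sort_le_of_card {n : ℕ} (f : Fin n → ℝ) (c : ℝ) (i : Fin n)
    (h : (i : ℕ) < (Finset.univ.filter fun t => f t ≤ c).card) :
    f (Tuple.sort (fun i => toLex (f i, i)) i) ≤ c := by
  classical
  set key : Fin n → Lex (ℝ × Fin n) := fun i => toLex (f i, i) with hkey
  set σ := Tuple.sort key with hσ
  have hmono : Monotone (key ∘ σ) := Tuple.monotone_sort key
  have hfmono : ∀ t u : Fin n, t ≤ u → f (σ t) ≤ f (σ u) := by
    intro t u htu
    have := hmono htu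
    simp only [Function.comp_apply, hkey] at this
    rcases Prod.Lex.le_iff.1 this with h | h
    · exact h.le
    · exact h.1.le
  by_contra hc
  push_neg at hc
  have hsub : (Finset.univ.filter fun t => f (σ t) ≤ c) ⊆ Finset.Iio i := by
    intro t ht
    simp only [Finset.mem_filter, Finset.mem_univ, true_and] at ht
    rw [Finset.mem_Iio]
    by_contra hti
    push_neg at hti
    exact absurd (lt_of_lt_of_le hc (hfmono i t hti)) (not_lt.2 ht)
  have hcard1 : (Finset.univ.filter fun u => f u ≤ c).card
      = (Finset.univ.filter fun t => f (σ t) ≤ c).card := by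
    apply Finset.card_bij (fun u _ => σ.symm u)
    · intro u hu
      simp only [Finset.mem_filter, Finset.mem_univ, true_and] at hu ⊢
      simpa using hu
    · intro u _ u' _ h
      exact σ.symm.injective h
    · intro t ht
      simp only [Finset.mem_filter, Finset.mem_univ, true_and] at ht
      exact ⟨σ t, by simpa using ht, by simp⟩
  have := (Finset.card_le_card hsub)
  rw [← hcard1, Fin.card_Iio] at this
  omega

lemma sorted_sum_le {n k : ℕ} (hkn : k ≤ n) (f : Fin n → ℝ) (hf : ∀ i, 0 ≤ f i)
    (e : ℝ) (he : 0 ≤ e)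
    (S : Fin k → Finset (Fin n)) (hne : ∀ j, (S j).Nonempty)
    (hdisj : ∀ j j', j ≠ j' → Disjoint (S j) (S j')) :
    ∑ i ∈ firstK n k, f (Tuple.sort (fun i => toLex (f i, i)) i) ^ e
      ≤ ∑ j : Fin k, ((S j).inf' (hne j) f) ^ e := by
  classical
  set b : Fin k → ℝ := fun j => (S j).inf' (hne j) f with hb
  set τ := Tuple.sort b with hτ
  have hbmono : Monotone (b ∘ τ) := Tuple.monotone_sort b
  have hw : ∀ j : Fin k, ∃ w ∈ S j, b j = f w := fun j => Finset.exists_mem_eq_inf' (hne j) f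
  choose w hwS hwf using hw
  have hwinj : Function.Injective w := by
    intro j j' h
    by_contra hne'
    exact (Finset.disjoint_left.1 (hdisj j j' hne') (hwS j)) (h ▸ hwS j')
  set σ := Tuple.sort (fun i => toLex (f i, i)) with hσ
  have key : ∀ i : Fin n, ∀ hik : (i : ℕ) < k, f (σ i) ≤ b (τ ⟨i, hik⟩) := by
    intro i hik
    apply sort_le_of_card
    set i' : Fin k := ⟨i, hik⟩ with hi'
    have hsub : (Finset.Iic i').image (fun t => w (τ t))
        ⊆ Finset.univ.filter fun t => f t ≤ b (τ i') := by
      intro u hu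
      simp only [Finset.mem_image, Finset.mem_Iic] at hu
      obtain ⟨t, htle, rfl⟩ := hu
      simp only [Finset.mem_filter, Finset.mem_univ, true_and]
      rw [← hwf (τ t)]
      exact hbmono htle
    have himg : Function.Injective fun t => w (τ t) :=
      fun a b hab => τ.injective (hwinj hab)
    have hcard : ((Finset.Iic i').image (fun t => w (τ t))).card = (i : ℕ) + 1 := by
      rw [Finset.card_image_of_injective _ himg, Fin.card_Iic]
    have := Finset.card_le_card hsub
    omega
  have hfirst : firstK n k = Finset.univ.map (Fin.castLEEmb hkn) := by
    ext i
    simp only [firstK, Finset.mem_filter, Finset.mem_univ, true_and, Finset.mem_map]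
    constructor
    · intro h; exact ⟨⟨i, h⟩, by simp [Fin.castLEEmb]⟩
    · rintro ⟨i', rfl⟩; simpa using i'.2
  show ∑ i ∈ firstK n k, f (σ i) ^ e ≤ ∑ j : Fin k, b j ^ e
  calc ∑ i ∈ firstK n k, f (σ i) ^ e
      = ∑ i' : Fin k, f (σ (Fin.castLE hkn i')) ^ e := by
        rw [hfirst, Finset.sum_map]; rfl
    _ ≤ ∑ i' : Fin k, b (τ i') ^ e := by
        apply Finset.sum_le_sum
        intro i' _
        have hik : ((Fin.castLE hkn i' : Fin n) : ℕ) < k := i'.2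
        have hkey := key (Fin.castLE hkn i') hik
        have heq : (⟨(Fin.castLE hkn i' : Fin n), hik⟩ : Fin k) = i' := by
          apply Fin.ext; rfl
        rw [heq] at hkey
        exact Real.rpow_le_rpow (hf _) hkey he
    _ = ∑ j : Fin k, b j ^ e := Equiv.sum_comp τ (fun j => b j ^ e)


lemma dyadic_bound {Z t e : ℝ} (hZ0 : 0 ≤ Z) (ht : 0 < t) (he : 0 ≤ e) {J : ℕ}
    (hZle : Z ≤ 2 ^ J * t) :
    Z ^ e ≤ t ^ e + ∑ j ∈ Finset.range J,
      (if 2 ^ j * t < Z then ((2:ℝ) ^ (j + 1) * t) ^ e else 0) := by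
  have hsum_nonneg : ∀ j ∈ Finset.range J,
      (0:ℝ) ≤ if 2 ^ j * t < Z then ((2:ℝ) ^ (j + 1) * t) ^ e else 0 := by
    intro j _
    split
    · exact Real.rpow_nonneg (by positivity) e
    · exact le_refl 0
  by_cases hZt : Z ≤ t
  · have h1 : Z ^ e ≤ t ^ e := Real.rpow_le_rpow hZ0 hZt he
    have h2 : (0:ℝ) ≤ ∑ j ∈ Finset.range J,
        (if 2 ^ j * t < Z then ((2:ℝ) ^ (j + 1) * t) ^ e else 0) :=
      Finset.sum_nonneg hsum_nonneg
    linarith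
  · push_neg at hZt
    have hJ : 1 ≤ J := by
      by_contra hJ0
      push_neg at hJ0
      interval_cases J
      simp only [pow_zero, one_mul] at hZle
      linarith
    set P : ℕ → Prop := fun j => 2 ^ j * t < Z with hP
    have hP0 : P 0 := by simpa [hP] using hZt
    classical
    set j₀ := Nat.findGreatest P (J - 1) with hj₀
    have hPj₀ : P j₀ := Nat.findGreatest_spec (Nat.zero_le _) hP0
    have hj₀le : j₀ ≤ J - 1 := Nat.findGreatest_le _
    have hup : Z ≤ 2 ^ (j₀ + 1) * t := by
      by_cases hcase : j₀ = J - 1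
      · have : 2 ^ J * t ≤ 2 ^ (j₀ + 1) * t := by
          have : J ≤ j₀ + 1 := by omega
          have h2 : (2:ℝ) ^ J ≤ 2 ^ (j₀ + 1) := pow_le_pow_right₀ one_le_two this
          nlinarith [ht]
        linarith
      · have hlt : j₀ + 1 ≤ J - 1 := by omega
        have : ¬ P (j₀ + 1) := Nat.findGreatest_is_greatest (by omega) hlt
        simpa [hP, not_lt] using this
    have hj₀mem : j₀ ∈ Finset.range J := Finset.mem_range.2 (by omega)
    have hterm : Z ^ e ≤ (if 2 ^ j₀ * t < Z then ((2:ℝ) ^ (j₀ + 1) * t) ^ e else 0) := by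
      rw [if_pos hPj₀]
      exact Real.rpow_le_rpow hZ0 hup he
    have hsingle := Finset.single_le_sum hsum_nonneg hj₀mem
    have ht0 : (0:ℝ) ≤ t ^ e := Real.rpow_nonneg ht.le e
    linarith

lemma term_bound {e : ℝ} (he : 0 ≤ e) {q : ℕ} (hq : e + 1 ≤ q) (j d : ℕ) (hd : 1 ≤ d) :
    ((2:ℝ) ^ (j + 1)) ^ e * Real.exp (-((2:ℝ) ^ (j * d)))
      ≤ 2 ^ e * (q.factorial : ℝ) * (1 / 2) ^ j := by
  set u : ℝ := 2 ^ j with hu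
  have hu0 : (0:ℝ) < u := by positivity
  have hu1 : (1:ℝ) ≤ u := one_le_pow₀ one_le_two
  have hexpu : (0:ℝ) < Real.exp u := Real.exp_pos u
  have hsplit : ((2:ℝ) ^ (j + 1)) ^ e = u ^ e * 2 ^ e := by
    rw [pow_succ, Real.mul_rpow hu0.le (by norm_num)]
  have hexp_le : Real.exp (-((2:ℝ) ^ (j * d))) ≤ Real.exp (-u) := by
    apply Real.exp_le_exp.2
    simp only [neg_le_neg_iff, hu]
    exact pow_le_pow_right₀ one_le_two (Nat.le_mul_of_pos_right j (by omega))
  have h1 : u ^ e * u ≤ (q.factorial : ℝ) * Real.exp u := by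
    have h2 : u ^ e * u = u ^ (e + 1) := by
      rw [Real.rpow_add hu0, Real.rpow_one]
    have h3 : u ^ (e + 1) ≤ u ^ (q : ℝ) :=
      Real.rpow_le_rpow_of_exponent_le hu1 hq
    have h4 : u ^ (q : ℝ) = u ^ q := Real.rpow_natCast u q
    have h5 : u ^ q / (q.factorial : ℝ) ≤ Real.exp u := by
      refine le_trans ?_ (Real.sum_le_exp_of_nonneg hu0.le (q + 1))
      refine Finset.single_le_sum (f := fun i => u ^ i / (i.factorial : ℝ)) ?_
        (Finset.self_mem_range_succ q)
      intro i _; positivity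
    have hfac : (0:ℝ) < (q.factorial : ℝ) := by positivity
    rw [div_le_iff₀ hfac] at h5
    calc u ^ e * u = u ^ (e + 1) := h2
      _ ≤ u ^ (q:ℝ) := h3
      _ = u ^ q := h4
      _ ≤ Real.exp u * (q.factorial : ℝ) := h5
      _ = (q.factorial : ℝ) * Real.exp u := by ring
  have hkey : u ^ e * Real.exp (-u) ≤ (q.factorial : ℝ) * u⁻¹ := by
    have h7 := mul_le_mul_of_nonneg_right h1 (le_of_lt (inv_pos.2 hexpu))
    have h8 : (q.factorial : ℝ) * Real.exp u * (Real.exp u)⁻¹ = (q.factorial : ℝ) := by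
      field_simp
    have h9 : u ^ e * u * (Real.exp u)⁻¹ = (u ^ e * Real.exp (-u)) * u := by
      rw [Real.exp_neg]; ring
    rw [h8, h9] at h7
    calc u ^ e * Real.exp (-u) = (u ^ e * Real.exp (-u)) * u * u⁻¹ := by
          field_simp
      _ ≤ (q.factorial : ℝ) * u⁻¹ :=
          mul_le_mul_of_nonneg_right h7 (le_of_lt (inv_pos.2 hu0))
  have hinv : u⁻¹ = (1 / 2 : ℝ) ^ j := by rw [hu, one_div, inv_pow]
  calc ((2:ℝ) ^ (j + 1)) ^ e * Real.exp (-((2:ℝ) ^ (j * d)))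
      ≤ u ^ e * 2 ^ e * Real.exp (-u) := by
        rw [hsplit]
        exact mul_le_mul_of_nonneg_left hexp_le (by positivity)
    _ = 2 ^ e * (u ^ e * Real.exp (-u)) := by ring
    _ ≤ 2 ^ e * ((q.factorial : ℝ) * u⁻¹) :=
        mul_le_mul_of_nonneg_left hkey (Real.rpow_nonneg (by norm_num) e)
    _ = 2 ^ e * (q.factorial : ℝ) * (1 / 2) ^ j := by rw [hinv]; ring


lemma block_expectation {d n : ℕ} (hd : 0 < d) {γ : ℝ} (hγ : 0 < γ)
    {x : EuclideanSpace ℝ (Fin d)} (hx : x ∈ unitCube d)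
    (S : Finset (Fin n)) (hS : S.Nonempty) {m : ℕ} (hm : 1 ≤ m) (hcard : S.card = m) :
    ∫ X : Fin n → EuclideanSpace ℝ (Fin d),
        ((S.inf' hS fun i => ‖X i - x‖) ^ (2 * γ))
      ∂(Measure.pi fun _ => (volume : Measure (EuclideanSpace ℝ (Fin d))).restrict (unitCube d))
    ≤ (1 + 2 ^ (2 * γ) * (((⌈2 * γ⌉₊ + 1).factorial : ℝ)) * 2) * (2 * Real.sqrt d) ^ (2 * γ)
        * (m : ℝ) ^ (-(2 * γ / (d : ℝ))) := by
  classical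
  set e : ℝ := 2 * γ with he_def
  have he : 0 < e := by positivity
  set q : ℕ := ⌈e⌉₊ + 1 with hq_def
  have hq : e + 1 ≤ (q : ℝ) := by
    rw [hq_def]
    push_cast
    have := Nat.le_ceil e
    linarith
  set ν := Measure.pi fun _ : Fin n =>
    (volume : Measure (EuclideanSpace ℝ (Fin d))).restrict (unitCube d) with hν
  haveI : IsProbabilityMeasure ν := by
    rw [hν]; infer_instance
  have hm0 : (0:ℝ) < m := by exact_mod_cast hm
  have hd0 : (0:ℝ) < d := by exact_mod_cast hd
  have hsd : (0:ℝ) < Real.sqrt d := Real.sqrt_pos.2 hd0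
  set t₀ : ℝ := 2 * Real.sqrt d * (m:ℝ) ^ (-(1/(d:ℝ))) with ht₀_def
  have hmd : (0:ℝ) < (m:ℝ) ^ (-(1/(d:ℝ))) := Real.rpow_pos_of_pos hm0 _
  have ht₀ : 0 < t₀ := by positivity
  set Z : (Fin n → EuclideanSpace ℝ (Fin d)) → ℝ :=
    fun X => S.inf' hS fun i => ‖X i - x‖ with hZ_def
  have hZcont : Continuous Z := by
    apply Continuous.finset_inf'_apply hS
    intro i _
    exact ((continuous_apply i).sub continuous_const).norm
  have hZmeas : Measurable Z := hZcont.measurable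
  have hZ0 : ∀ X, 0 ≤ Z X := by
    intro X
    apply Finset.le_inf'
    intro i _
    exact norm_nonneg _
  set C : Set (Fin n → EuclideanSpace ℝ (Fin d)) := {X | ∀ i, X i ∈ unitCube d} with hC_def
  have hCmeas : MeasurableSet C := by
    have : C = Set.univ.pi fun _ : Fin n => unitCube d := by
      ext X; simp [hC_def, Set.mem_pi]
    rw [this]
    exact MeasurableSet.univ_pi fun _ => measurableSet_unitCube
  have hC1 : ν C = 1 := by
    have h1 : C = Set.univ.pi fun _ : Fin n => unitCube d := by
      ext X; simp [hC_def, Set.mem_pi]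
    rw [h1, hν, Measure.pi_pi]
    simp [Measure.restrict_apply_self, volume_unitCube]
  have hC0 : ν Cᶜ = 0 := by
    rw [measure_compl hCmeas (measure_ne_top _ _), hC1, measure_univ, tsub_self]
  have hCae : ∀ᵐ X ∂ν, X ∈ C := by
    rw [Filter.eventually_iff]
    exact MeasureTheory.mem_ae_iff.2 (by simpa using hC0)
  have hZsq : ∀ X ∈ C, Z X ≤ Real.sqrt d := by
    intro X hXC
    obtain ⟨i₀, hi₀⟩ := hS
    exact le_trans (Finset.inf'_le _ hi₀) (norm_le_sqrt_of_mem_cube hx (hXC i₀))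
  -- sqrt d ≤ 2 ^ m * t₀
  have hsqle : Real.sqrt d ≤ 2 ^ m * t₀ := by
    have hp : (0:ℝ) < (m:ℝ) ^ ((1:ℝ)/d) := Real.rpow_pos_of_pos hm0 _
    have h : (m:ℝ) ^ ((1:ℝ)/d) ≤ 2 ^ (m+1) := by
      have h1 : (m:ℝ) ^ ((1:ℝ)/d) ≤ (m:ℝ) ^ (1:ℝ) := by
        apply Real.rpow_le_rpow_of_exponent_le (by exact_mod_cast hm)
        rw [div_le_one hd0]
        exact_mod_cast hd
      have h2 : (m:ℝ) ^ (1:ℝ) = (m:ℝ) := Real.rpow_one _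
      have h3 : (m:ℝ) ≤ 2 ^ m := by
        exact_mod_cast (Nat.lt_two_pow_self (n := m)).le
      have h4 : (2:ℝ) ^ m ≤ 2 ^ (m+1) := by
        apply pow_le_pow_right₀ one_le_two (by omega)
      exact h2 ▸ h1.trans (h2.le.trans (h3.trans h4))
    have hid : (m:ℝ) ^ ((1:ℝ)/d) * ((m:ℝ) ^ ((1:ℝ)/d))⁻¹ = 1 := mul_inv_cancel₀ hp.ne'
    have h1 : (1:ℝ) ≤ 2 ^ (m+1) * ((m:ℝ) ^ ((1:ℝ)/d))⁻¹ := by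
      calc (1:ℝ) = (m:ℝ) ^ ((1:ℝ)/d) * ((m:ℝ) ^ ((1:ℝ)/d))⁻¹ := hid.symm
        _ ≤ 2 ^ (m+1) * ((m:ℝ) ^ ((1:ℝ)/d))⁻¹ :=
            mul_le_mul_of_nonneg_right h (inv_nonneg.2 hp.le)
    have h2 : Real.sqrt d ≤ Real.sqrt d * (2 ^ (m+1) * ((m:ℝ) ^ ((1:ℝ)/d))⁻¹) :=
      le_mul_of_one_le_right hsd.le h1
    have h3 : Real.sqrt d * (2 ^ (m+1) * ((m:ℝ) ^ ((1:ℝ)/d))⁻¹) = 2 ^ m * t₀ := by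
      rw [ht₀_def, Real.rpow_neg hm0.le]
      ring
    linarith
  -- main chain
  set H : (Fin n → EuclideanSpace ℝ (Fin d)) → ℝ := fun X => t₀ ^ e +
    ∑ j ∈ Finset.range m,
      Set.indicator {Y | 2 ^ j * t₀ < Z Y} (fun _ => ((2:ℝ) ^ (j + 1) * t₀) ^ e) X
    with hH_def
  have hEmeas : ∀ j : ℕ, MeasurableSet {Y | 2 ^ j * t₀ < Z Y} :=
    fun j => measurableSet_lt measurable_const hZmeas
  have hHint : Integrable H ν := by
    apply Integrable.add (integrable_const _)
    apply integrable_finset_sum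
    intro j _
    rw [integrable_indicator_iff (hEmeas j)]
    exact integrableOn_const (measure_ne_top _ _)
  have hle : ∀ᵐ X ∂ν, Z X ^ e ≤ H X := by
    filter_upwards [hCae] with X hXC
    have h1 := dyadic_bound (hZ0 X) ht₀ he.le (J := m) ((hZsq X hXC).trans hsqle)
    have h2 : H X = t₀ ^ e + ∑ j ∈ Finset.range m,
        (if 2 ^ j * t₀ < Z X then ((2:ℝ) ^ (j + 1) * t₀) ^ e else 0) := by
      simp only [hH_def, Set.indicator_apply, Set.mem_setOf_eq]
    rw [h2]
    exact h1
  have hint_eq : ∫ X, H X ∂ν = t₀ ^ e + ∑ j ∈ Finset.range m,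
      (ν {Y | 2 ^ j * t₀ < Z Y}).toReal * ((2:ℝ) ^ (j + 1) * t₀) ^ e := by
    have h0 : (fun X => H X) = fun X => t₀ ^ e + ∑ j ∈ Finset.range m,
        Set.indicator {Y | 2 ^ j * t₀ < Z Y} (fun _ => ((2:ℝ) ^ (j + 1) * t₀) ^ e) X := rfl
    rw [h0, integral_add (integrable_const _) ?hsum, integral_const]
    case hsum =>
      apply integrable_finset_sum
      intro j _
      rw [integrable_indicator_iff (hEmeas j)]
      exact integrableOn_const (measure_ne_top _ _)
    rw [integral_finset_sum]
    · congr 1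
      · simp [measure_univ]
      · apply Finset.sum_congr rfl
        intro j _
        rw [integral_indicator_const _ (hEmeas j)]
        simp [smul_eq_mul]
        exact Or.inl rfl
    · intro j _
      rw [integrable_indicator_iff (hEmeas j)]
      exact integrableOn_const (measure_ne_top _ _)
  have hνE : ∀ j : ℕ, (ν {Y | 2 ^ j * t₀ < Z Y}).toReal ≤ Real.exp (-((2:ℝ) ^ (j * d))) := by
    intro j
    by_cases hcase : (2:ℝ) ^ j * (m:ℝ) ^ (-(1/(d:ℝ))) ≤ 1
    · have hsj : (0:ℝ) < 2 ^ j * t₀ := by positivity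
      have hev : {Y | 2 ^ j * t₀ < Z Y}
          = {X : Fin n → EuclideanSpace ℝ (Fin d) | ∀ i ∈ S, 2 ^ j * t₀ < ‖X i - x‖} := by
        ext X
        simp only [Set.mem_setOf_eq, hZ_def]
        exact Finset.lt_inf'_iff hS
      have htp := tail_prob hd hx hsj S
      have hr : min ((2 ^ j * t₀) / (2 * Real.sqrt d)) 1 = 2 ^ j * (m:ℝ) ^ (-(1/(d:ℝ))) := by
        have hq1 : (2 ^ j * t₀) / (2 * Real.sqrt d) = 2 ^ j * (m:ℝ) ^ (-(1/(d:ℝ))) := by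
          rw [ht₀_def]
          field_simp
        rw [hq1]
        exact min_eq_left hcase
      have hrd : ((2:ℝ) ^ j * (m:ℝ) ^ (-(1/(d:ℝ)))) ^ d = (2:ℝ) ^ (j * d) * ((m:ℝ))⁻¹ := by
        rw [mul_pow, ← pow_mul]
        congr 1
        rw [← Real.rpow_natCast ((m:ℝ) ^ (-(1/(d:ℝ)))) d, ← Real.rpow_mul hm0.le]
        have hexp : (-(1/(d:ℝ))) * (d:ℕ) = -1 := by
          field_simp
        rw [hexp, Real.rpow_neg_one]
      have hmr : (S.card : ℝ) * (min ((2 ^ j * t₀) / (2 * Real.sqrt d)) 1) ^ d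
          = (2:ℝ) ^ (j * d) := by
        rw [hr, hrd, hcard]
        field_simp
      rw [hev]
      apply ENNReal.toReal_le_of_le_ofReal (Real.exp_nonneg _)
      calc ν {X | ∀ i ∈ S, 2 ^ j * t₀ < ‖X i - x‖}
          ≤ ENNReal.ofReal (Real.exp (-(S.card * (min ((2 ^ j * t₀) / (2 * Real.sqrt d)) 1) ^ d))) := htp
        _ = ENNReal.ofReal (Real.exp (-((2:ℝ) ^ (j * d)))) := by rw [hmr]
    · push_neg at hcase
      have hνzero : ν {Y | 2 ^ j * t₀ < Z Y} = 0 := by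
        apply measure_mono_null _ hC0
        intro X hX
        simp only [Set.mem_compl_iff]
        intro hXC
        have h1 := hZsq X hXC
        have h2 : 2 ^ j * t₀ < Z X := hX
        have h3 : 2 * Real.sqrt d < 2 ^ j * t₀ := by
          have : 2 ^ j * t₀ = 2 * Real.sqrt d * ((2:ℝ) ^ j * (m:ℝ) ^ (-(1/(d:ℝ)))) := by
            rw [ht₀_def]; ring
          nlinarith
        nlinarith
      rw [hνzero]
      simp [Real.exp_nonneg]
  have hsum_bound : ∑ j ∈ Finset.range m,
      (ν {Y | 2 ^ j * t₀ < Z Y}).toReal * ((2:ℝ) ^ (j + 1) * t₀) ^ e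
      ≤ 2 ^ e * (q.factorial : ℝ) * 2 * t₀ ^ e := by
    have hstep : ∀ j ∈ Finset.range m,
        (ν {Y | 2 ^ j * t₀ < Z Y}).toReal * ((2:ℝ) ^ (j + 1) * t₀) ^ e
        ≤ (2 ^ e * (q.factorial : ℝ) * (1/2) ^ j) * t₀ ^ e := by
      intro j _
      have hc : ((2:ℝ) ^ (j + 1) * t₀) ^ e = ((2:ℝ) ^ (j + 1)) ^ e * t₀ ^ e :=
        Real.mul_rpow (by positivity) ht₀.le
      have hc0 : (0:ℝ) ≤ ((2:ℝ) ^ (j + 1) * t₀) ^ e := Real.rpow_nonneg (by positivity) e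
      calc (ν {Y | 2 ^ j * t₀ < Z Y}).toReal * ((2:ℝ) ^ (j + 1) * t₀) ^ e
          ≤ Real.exp (-((2:ℝ) ^ (j * d))) * ((2:ℝ) ^ (j + 1) * t₀) ^ e :=
            mul_le_mul_of_nonneg_right (hνE j) hc0
        _ = (((2:ℝ) ^ (j + 1)) ^ e * Real.exp (-((2:ℝ) ^ (j * d)))) * t₀ ^ e := by
            rw [hc]; ring
        _ ≤ (2 ^ e * (q.factorial : ℝ) * (1/2) ^ j) * t₀ ^ e := by
            apply mul_le_mul_of_nonneg_right (term_bound he.le hq j d hd)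
              (Real.rpow_nonneg ht₀.le e)
    calc ∑ j ∈ Finset.range m,
        (ν {Y | 2 ^ j * t₀ < Z Y}).toReal * ((2:ℝ) ^ (j + 1) * t₀) ^ e
        ≤ ∑ j ∈ Finset.range m, (2 ^ e * (q.factorial : ℝ) * (1/2) ^ j) * t₀ ^ e :=
          Finset.sum_le_sum hstep
      _ = (2 ^ e * (q.factorial : ℝ) * t₀ ^ e) * ∑ j ∈ Finset.range m, (1/2 : ℝ) ^ j := by
          rw [Finset.mul_sum]
          apply Finset.sum_congr rfl
          intro j _
          ring
      _ ≤ (2 ^ e * (q.factorial : ℝ) * t₀ ^ e) * 2 := by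
          apply mul_le_mul_of_nonneg_left (sum_geometric_two_le m)
          positivity
      _ = 2 ^ e * (q.factorial : ℝ) * 2 * t₀ ^ e := by ring
  have ht₀e : t₀ ^ e = (2 * Real.sqrt d) ^ e * (m:ℝ) ^ (-(e/(d:ℝ))) := by
    rw [ht₀_def, Real.mul_rpow (by positivity) hmd.le]
    congr 1
    rw [← Real.rpow_mul hm0.le]
    congr 1
    ring
  have hfinal : ∫ X, Z X ^ e ∂ν
      ≤ (1 + 2 ^ e * (q.factorial : ℝ) * 2) * (2 * Real.sqrt d) ^ e
          * (m:ℝ) ^ (-(e/(d:ℝ))) := by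
    calc ∫ X, Z X ^ e ∂ν ≤ ∫ X, H X ∂ν :=
          integral_mono_of_nonneg
            (Filter.Eventually.of_forall fun X => Real.rpow_nonneg (hZ0 X) e) hHint hle
      _ = t₀ ^ e + ∑ j ∈ Finset.range m,
          (ν {Y | 2 ^ j * t₀ < Z Y}).toReal * ((2:ℝ) ^ (j + 1) * t₀) ^ e := hint_eq
      _ ≤ t₀ ^ e + 2 ^ e * (q.factorial : ℝ) * 2 * t₀ ^ e := by linarith
      _ = (1 + 2 ^ e * (q.factorial : ℝ) * 2) * t₀ ^ e := by ring
      _ = (1 + 2 ^ e * (q.factorial : ℝ) * 2) * (2 * Real.sqrt d) ^ e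
          * (m:ℝ) ^ (-(e/(d:ℝ))) := by rw [ht₀e]; ring
  exact hfinal


lemma cube_ae (d n : ℕ) :
    ∀ᵐ X ∂(Measure.pi fun _ : Fin n =>
        (volume : Measure (EuclideanSpace ℝ (Fin d))).restrict (unitCube d)),
      ∀ i, X i ∈ unitCube d := by
  set ν := Measure.pi fun _ : Fin n =>
    (volume : Measure (EuclideanSpace ℝ (Fin d))).restrict (unitCube d) with hν
  haveI : IsProbabilityMeasure ν := by rw [hν]; infer_instance
  set C : Set (Fin n → EuclideanSpace ℝ (Fin d)) := {X | ∀ i, X i ∈ unitCube d} with hC_def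
  have h1 : C = Set.univ.pi fun _ : Fin n => unitCube d := by
    ext X; simp [hC_def, Set.mem_pi]
  have hCmeas : MeasurableSet C := by
    rw [h1]; exact MeasurableSet.univ_pi fun _ => measurableSet_unitCube
  have hC1 : ν C = 1 := by
    rw [h1, hν, Measure.pi_pi]
    simp [Measure.restrict_apply_self, volume_unitCube]
  have hC0 : ν Cᶜ = 0 := by
    rw [measure_compl hCmeas (measure_ne_top _ _), hC1, measure_univ, tsub_self]
  rw [Filter.eventually_iff]
  exact MeasureTheory.mem_ae_iff.2 (by simpa using hC0)

lemma block_integrable {d n : ℕ} {γ : ℝ} (hγ : 0 < γ)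
    {x : EuclideanSpace ℝ (Fin d)} (hx : x ∈ unitCube d)
    (S : Finset (Fin n)) (hS : S.Nonempty) :
    Integrable (fun X : Fin n → EuclideanSpace ℝ (Fin d) =>
        (S.inf' hS fun i => ‖X i - x‖) ^ (2 * γ))
      (Measure.pi fun _ =>
        (volume : Measure (EuclideanSpace ℝ (Fin d))).restrict (unitCube d)) := by
  have hZcont : Continuous (fun X : Fin n → EuclideanSpace ℝ (Fin d) =>
      S.inf' hS fun i => ‖X i - x‖) := by
    apply Continuous.finset_inf'_apply hS
    intro i _
    exact ((continuous_apply i).sub continuous_const).norm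
  have hcont : Continuous (fun X : Fin n → EuclideanSpace ℝ (Fin d) =>
      (S.inf' hS fun i => ‖X i - x‖) ^ (2 * γ)) :=
    (Real.continuous_rpow_const (by positivity)).comp hZcont
  apply Integrable.mono' (integrable_const ((Real.sqrt d) ^ (2 * γ)))
    hcont.measurable.aestronglyMeasurable
  filter_upwards [cube_ae d n] with X hXC
  obtain ⟨i₀, hi₀⟩ := id hS
  have hZ0 : 0 ≤ S.inf' hS fun i => ‖X i - x‖ :=
    Finset.le_inf' hS _ fun i _ => norm_nonneg _
  have hZsq : (S.inf' hS fun i => ‖X i - x‖) ≤ Real.sqrt d :=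
    le_trans (Finset.inf'_le _ hi₀) (norm_le_sqrt_of_mem_cube hx (hXC i₀))
  rw [Real.norm_eq_abs, abs_of_nonneg (Real.rpow_nonneg hZ0 _)]
  exact Real.rpow_le_rpow hZ0 hZsq (by positivity)

/-- Proposition: if `X, X₁, …, Xₙ` are i.i.d. uniform on `[0,1]^d`, then for
any `γ > 0` there is `c₁ > 0` depending only on `γ` and `d` with
`(1/k) E[∑_{i=1}^k ‖X_{i,X} - X‖^{2γ}] ≤ c₁ (k/n)^{2γ/d}` for all `1 ≤ k ≤ n`. -/
theorem rate_knn_distance_moment (d : ℕ) (hd : 0 < d) (γ : ℝ) (hγ : 0 < γ) :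
    ∃ c₁ : ℝ, 0 < c₁ ∧ ∀ n k : ℕ, 1 ≤ k → k ≤ n →
      (1 / (k : ℝ)) *
          ∫ x in unitCube d,
            (∫ X : Fin n → EuclideanSpace ℝ (Fin d),
                (∑ i ∈ firstK n k, ‖X (nnPerm x X i) - x‖ ^ (2 * γ))
              ∂(Measure.pi fun _ => volume.restrict (unitCube d)))
        ≤ c₁ * ((k : ℝ) / (n : ℝ)) ^ (2 * γ / (d : ℝ)) := by
  classical
  have hd0 : (0:ℝ) < d := by exact_mod_cast hd
  set K : ℝ := (1 + 2 ^ (2 * γ) * (((⌈2 * γ⌉₊ + 1).factorial : ℝ)) * 2)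
      * (2 * Real.sqrt d) ^ (2 * γ) with hK_def
  have hsd : (0:ℝ) < Real.sqrt d := Real.sqrt_pos.2 hd0
  have hKpos : 0 < K := by
    rw [hK_def]
    have h1 : (0:ℝ) < 2 ^ (2 * γ) := Real.rpow_pos_of_pos (by norm_num) _
    have h2 : (0:ℝ) < (((⌈2 * γ⌉₊ + 1).factorial : ℝ)) := by positivity
    have h3 : (0:ℝ) < (2 * Real.sqrt d) ^ (2 * γ) := Real.rpow_pos_of_pos (by positivity) _
    positivity
  refine ⟨K * 2 ^ (2 * γ / (d:ℝ)), by positivity, ?_⟩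
  intro n k hk hkn
  have hk0R : (0:ℝ) < k := by exact_mod_cast hk
  have hn0 : 0 < n := lt_of_lt_of_le hk hkn
  have hn0R : (0:ℝ) < n := by exact_mod_cast hn0
  set m := n / k with hm_def
  have hm : 1 ≤ m := (Nat.one_le_div_iff (by omega)).2 hkn
  have hm0R : (0:ℝ) < m := by exact_mod_cast hm
  have hkm : k * m ≤ n := by
    rw [hm_def, mul_comm]
    exact Nat.div_mul_le_self n k
  -- blocks
  have hblock_lt : ∀ j : Fin k, ∀ a ∈ Finset.Ico ((j:ℕ) * m) ((j:ℕ) * m + m), a < n := by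
    intro j a ha
    rw [Finset.mem_Ico] at ha
    have hj1 : (j:ℕ) + 1 ≤ k := j.isLt
    have : ((j:ℕ) + 1) * m ≤ k * m := Nat.mul_le_mul_right m hj1
    have : (j:ℕ) * m + m ≤ k * m := by
      calc (j:ℕ) * m + m = ((j:ℕ) + 1) * m := by ring
        _ ≤ k * m := this
    omega
  set S : Fin k → Finset (Fin n) := fun j =>
    (Finset.Ico ((j:ℕ) * m) ((j:ℕ) * m + m)).attachFin (hblock_lt j) with hS_def
  have hScard : ∀ j, (S j).card = m := by
    intro j
    rw [hS_def]
    rw [Finset.card_attachFin, Nat.card_Ico]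
    omega
  have hSne : ∀ j, (S j).Nonempty := by
    intro j
    apply Finset.card_pos.1
    rw [hScard]
    omega
  have hSdisj : ∀ j j', j ≠ j' → Disjoint (S j) (S j') := by
    intro j j' hne
    rw [Finset.disjoint_left]
    intro a haj haj'
    rw [hS_def, Finset.mem_attachFin, Finset.mem_Ico] at haj haj'
    have hdiv : (a : ℕ) / m = (j:ℕ) := Nat.div_eq_of_lt_le haj.1 (by
      rw [Nat.succ_mul]; omega)
    have hdiv' : (a : ℕ) / m = (j':ℕ) := Nat.div_eq_of_lt_le haj'.1 (by
      rw [Nat.succ_mul]; omega)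
    exact hne (Fin.ext (by omega))
  set ν := Measure.pi fun _ : Fin n =>
    (volume : Measure (EuclideanSpace ℝ (Fin d))).restrict (unitCube d) with hν
  haveI : IsProbabilityMeasure ν := by rw [hν]; infer_instance
  set B : ℝ := K * (m : ℝ) ^ (-(2 * γ / (d : ℝ))) with hB_def
  have hBpos : 0 < B := by
    rw [hB_def]
    exact mul_pos hKpos (Real.rpow_pos_of_pos hm0R _)
  -- inner bound
  have hinner : ∀ x ∈ unitCube d,
      (∫ X : Fin n → EuclideanSpace ℝ (Fin d),
          (∑ i ∈ firstK n k, ‖X (nnPerm x X i) - x‖ ^ (2 * γ)) ∂ν) ≤ k * B := by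
    intro x hx
    have hgh : ∀ X : Fin n → EuclideanSpace ℝ (Fin d),
        (∑ i ∈ firstK n k, ‖X (nnPerm x X i) - x‖ ^ (2 * γ))
          ≤ ∑ j : Fin k, ((S j).inf' (hSne j) fun i => ‖X i - x‖) ^ (2 * γ) := by
      intro X
      exact sorted_sum_le hkn (fun i => ‖X i - x‖) (fun i => norm_nonneg _)
        (2 * γ) (by positivity) S hSne hSdisj
    have hint_h : Integrable (fun X : Fin n → EuclideanSpace ℝ (Fin d) =>
        ∑ j : Fin k, ((S j).inf' (hSne j) fun i => ‖X i - x‖) ^ (2 * γ)) ν := by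
      apply integrable_finset_sum
      intro j _
      exact block_integrable hγ hx (S j) (hSne j)
    calc (∫ X : Fin n → EuclideanSpace ℝ (Fin d),
          (∑ i ∈ firstK n k, ‖X (nnPerm x X i) - x‖ ^ (2 * γ)) ∂ν)
        ≤ ∫ X : Fin n → EuclideanSpace ℝ (Fin d),
            (∑ j : Fin k, ((S j).inf' (hSne j) fun i => ‖X i - x‖) ^ (2 * γ)) ∂ν := by
          apply integral_mono_of_nonneg
          · apply Filter.Eventually.of_forall
            intro X
            apply Finset.sum_nonneg
            intro i _
            exact Real.rpow_nonneg (norm_nonneg _) _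
          · exact hint_h
          · exact Filter.Eventually.of_forall hgh
      _ = ∑ j : Fin k, ∫ X : Fin n → EuclideanSpace ℝ (Fin d),
            (((S j).inf' (hSne j) fun i => ‖X i - x‖) ^ (2 * γ)) ∂ν := by
          apply integral_finset_sum
          intro j _
          exact block_integrable hγ hx (S j) (hSne j)
      _ ≤ ∑ _j : Fin k, B := by
          apply Finset.sum_le_sum
          intro j _
          exact block_expectation hd hγ hx (S j) (hSne j) hm (hScard j)
      _ = k * B := by
          rw [Finset.sum_const, Finset.card_univ, Fintype.card_fin, nsmul_eq_mul]
  -- outer bound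
  have houter : (∫ x in unitCube d,
      (∫ X : Fin n → EuclideanSpace ℝ (Fin d),
          (∑ i ∈ firstK n k, ‖X (nnPerm x X i) - x‖ ^ (2 * γ)) ∂ν))
      ≤ k * B := by
    have h1 : (∫ x in unitCube d,
        (∫ X : Fin n → EuclideanSpace ℝ (Fin d),
            (∑ i ∈ firstK n k, ‖X (nnPerm x X i) - x‖ ^ (2 * γ)) ∂ν))
        ≤ ∫ _x in unitCube d, ((k:ℝ) * B) := by
      apply integral_mono_of_nonneg
      · apply Filter.Eventually.of_forall
        intro x
        apply integral_nonneg
        intro X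
        apply Finset.sum_nonneg
        intro i _
        exact Real.rpow_nonneg (norm_nonneg _) _
      · exact integrable_const _
      · refine (MeasureTheory.ae_restrict_iff' measurableSet_unitCube).2 ?_
        exact Filter.Eventually.of_forall fun x hx => hinner x hx
    have h2 : (∫ _x in unitCube d, ((k:ℝ) * B)) = k * B := by
      rw [integral_const]
      simp [measure_univ]
    linarith
  -- conclude
  have hstep : (1 / (k : ℝ)) *
      (∫ x in unitCube d,
        (∫ X : Fin n → EuclideanSpace ℝ (Fin d),
            (∑ i ∈ firstK n k, ‖X (nnPerm x X i) - x‖ ^ (2 * γ)) ∂ν))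
      ≤ B := by
    have := mul_le_mul_of_nonneg_left houter (le_of_lt (by positivity : (0:ℝ) < 1 / k))
    calc (1 / (k : ℝ)) * _ ≤ (1 / (k : ℝ)) * ((k:ℝ) * B) := this
      _ = B := by field_simp
  -- bound B by c₁ (k/n)^(2γ/d)
  have hmono : (m : ℝ) ^ (-(2 * γ / (d : ℝ)))
      ≤ 2 ^ (2 * γ / (d:ℝ)) * ((k:ℝ) / n) ^ (2 * γ / (d : ℝ)) := by
    have hnat : (n:ℝ) ≤ 2 * k * m := by
      have h1 := Nat.div_add_mod n k
      have h2 : n % k < k := Nat.mod_lt n (by omega)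
      have h3 : k ≤ k * m := Nat.le_mul_of_pos_right k (by omega)
      have h4 : n ≤ 2 * (k * m) := by
        rw [hm_def] at *
        omega
      have h4R : (n:ℝ) ≤ 2*((k:ℝ)*(m:ℝ)) := by exact_mod_cast h4
      linarith
    have hminv : (m:ℝ)⁻¹ ≤ 2 * k / n := by
      rw [inv_eq_one_div, div_le_div_iff₀ hm0R hn0R]
      linarith
    have hed : (0:ℝ) ≤ 2 * γ / d := by positivity
    calc (m : ℝ) ^ (-(2 * γ / (d : ℝ)))
        = ((m:ℝ)⁻¹) ^ (2 * γ / (d : ℝ)) := by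
          rw [Real.rpow_neg hm0R.le, ← Real.inv_rpow hm0R.le]
      _ ≤ (2 * (k:ℝ) / n) ^ (2 * γ / (d : ℝ)) :=
          Real.rpow_le_rpow (inv_nonneg.2 hm0R.le) hminv hed
      _ = 2 ^ (2 * γ / (d:ℝ)) * ((k:ℝ) / n) ^ (2 * γ / (d : ℝ)) := by
          rw [mul_div_assoc, Real.mul_rpow (by norm_num) (by positivity)]
  calc (1 / (k : ℝ)) * _ ≤ B := hstep
    _ = K * (m : ℝ) ^ (-(2 * γ / (d : ℝ))) := hB_def
    _ ≤ K * (2 ^ (2 * γ / (d:ℝ)) * ((k:ℝ) / n) ^ (2 * γ / (d : ℝ))) :=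
        mul_le_mul_of_nonneg_left hmono hKpos.le
    _ = K * 2 ^ (2 * γ / (d:ℝ)) * ((k:ℝ) / n) ^ (2 * γ / (d : ℝ)) := by ring

end KnnAux
end

section
/- There exists a constant c_2 > 0, depending only on d, such that for all x, z ∈ [0,1]^d and every coordinate index 1 ≤ s ≤ d, | ∫_{G(x,z)} (y^{(s)} − x^{(s)}) dy | ≤ c_2 · vol[G(x,z)]^{(d+1)/d}, where the superscript (s) denotes the s-th coordinate and the integral is with respect to Lebesgue measure on ℝ^d. -/
set_option maxHeartbeats 1000000


open MeasureTheory Finset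

/-- `H(u,v)`: the closed Euclidean ball centered at `u` of radius `‖v - u‖`. -/
def Hset {d : ℕ} (u v : EuclideanSpace ℝ (Fin d)) : Set (EuclideanSpace ℝ (Fin d)) :=
  Metric.closedBall u ‖v - u‖

/-- `G(u,v) = H(u,v) ∩ [0,1]^d`. -/
def Gset {d : ℕ} (u v : EuclideanSpace ℝ (Fin d)) : Set (EuclideanSpace ℝ (Fin d)) :=
  Hset u v ∩ unitCube d

lemma abs_coord_le_norm {d : ℕ} (v : EuclideanSpace ℝ (Fin d)) (s : Fin d) :
    |v s| ≤ ‖v‖ := by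
  rw [EuclideanSpace.norm_eq]
  have h1 : |v s| = Real.sqrt (‖v s‖ ^ 2) := by
    rw [Real.sqrt_sq_eq_abs, abs_norm, Real.norm_eq_abs]
  rw [h1]
  apply Real.sqrt_le_sqrt
  exact Finset.single_le_sum (f := fun i => ‖v i‖ ^ 2)
    (fun i _ => by positivity) (Finset.mem_univ s)

/-- Claim 2: there is `c₂ > 0` depending only on `d` such that for all
`x, z ∈ [0,1]^d` and every coordinate `s`,
`|∫_{G(x,z)} (y⁽ˢ⁾ - x⁽ˢ⁾) dy| ≤ c₂ · vol[G(x,z)]^{(d+1)/d}`. -/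
theorem integral_coordinate_Gset_bound (d : ℕ) (hd : 0 < d) :
    ∃ c₂ : ℝ, 0 < c₂ ∧ ∀ x ∈ unitCube d, ∀ z ∈ unitCube d, ∀ s : Fin d,
      |∫ y in Gset x z, (y s - x s)| ≤
        c₂ * (volume (Gset x z)).toReal ^ (((d : ℝ) + 1) / (d : ℝ)) := by
  have hd' : (0 : ℝ) < d := Nat.cast_pos.mpr hd
  have hsd : (1 : ℝ) ≤ Real.sqrt d := by
    rw [show (1:ℝ) = Real.sqrt 1 by simp]
    exact Real.sqrt_le_sqrt (by exact_mod_cast hd)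
  have hsd0 : (0 : ℝ) < Real.sqrt d := lt_of_lt_of_le one_pos hsd
  refine ⟨2 * d, by positivity, ?_⟩
  intro x hx z hz s
  set r : ℝ := ‖z - x‖ with hrdef
  have hr0 : 0 ≤ r := norm_nonneg _
  set V : ℝ := (volume (Gset x z)).toReal with hVdef
  have hV0 : 0 ≤ V := ENNReal.toReal_nonneg
  have hGsub : Gset x z ⊆ Metric.closedBall x r := Set.inter_subset_left
  have hGfin : volume (Gset x z) < ⊤ :=
    lt_of_le_of_lt (measure_mono hGsub) measure_closedBall_lt_top
  -- Step 1: |∫| ≤ r * V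
  have key1 : |∫ y in Gset x z, (y s - x s)| ≤ r * V := by
    have hb : ∀ y ∈ Gset x z, ‖y s - x s‖ ≤ r := by
      intro y hy
      have h1 : |(y - x) s| ≤ ‖y - x‖ := abs_coord_le_norm _ s
      have h2 : (y - x) s = y s - x s := rfl
      have h3 : ‖y - x‖ ≤ r := by
        have := hy.1
        rw [Hset, Metric.mem_closedBall, dist_eq_norm] at this
        exact this
      rw [h2] at h1
      calc ‖y s - x s‖ = |y s - x s| := rfl
        _ ≤ ‖y - x‖ := h1
        _ ≤ r := h3
    have hcont : Continuous (fun y : EuclideanSpace ℝ (Fin d) => y s - x s) :=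
      ((EuclideanSpace.proj s : EuclideanSpace ℝ (Fin d) →L[ℝ] ℝ).continuous).sub
        continuous_const
    have hm : AEStronglyMeasurable (fun y : EuclideanSpace ℝ (Fin d) => y s - x s)
        (volume.restrict (Gset x z)) :=
      hcont.aestronglyMeasurable
    have := norm_setIntegral_le_of_norm_le_const (μ := volume) (s := Gset x z)
      (f := fun y : EuclideanSpace ℝ (Fin d) => y s - x s) hGfin hb
    simpa [Real.norm_eq_abs, hVdef, measureReal_def] using this
  rcases eq_or_lt_of_le hr0 with hr | hrpos
  · -- r = 0: G has measure 0
    have hsub : Gset x z ⊆ {x} := by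
      intro y hy
      have := hy.1
      rw [Hset, ← hrdef, ← hr, Metric.closedBall_zero] at this
      exact this
    have hsing : volume ({x} : Set (EuclideanSpace ℝ (Fin d))) = 0 := by
      have he : ({x} : Set (EuclideanSpace ℝ (Fin d))) =
          (MeasurableEquiv.toLp 2 (Fin d → ℝ)).symm ⁻¹' (Set.univ.pi fun i => {x i}) := by
        ext y
        simp only [Set.mem_preimage, Set.mem_pi, Set.mem_univ, forall_true_left,
          Set.mem_singleton_iff, MeasurableEquiv.coe_toLp_symm]
        constructor
        · intro h i; rw [h]
        · intro h; ext i; exact h i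
      rw [he, (EuclideanSpace.volume_preserving_symm_measurableEquiv_toLp (Fin d)).measure_preimage
        (MeasurableSet.univ_pi (fun i => measurableSet_singleton _)).nullMeasurableSet,
        volume_pi_pi]
      simp only [Real.volume_singleton, Finset.prod_const, Finset.card_univ, Fintype.card_fin]
      exact zero_pow hd.ne'
    have hvol : volume (Gset x z) = 0 :=
      le_antisymm (le_trans (measure_mono hsub) (le_of_eq hsing)) zero_le
    have hV : V = 0 := by rw [hVdef, hvol]; simp
    have hint : (∫ y in Gset x z, (y s - x s)) = 0 := by
      rw [Measure.restrict_eq_zero.mpr hvol]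
      simp
    rw [hint, hV, abs_zero, Real.zero_rpow (by positivity)]
    simp
  · -- r > 0: lower bound on V via a box inside Gset
    set ℓ : ℝ := min r 1 / (2 * Real.sqrt d) with hℓdef
    have hℓpos : 0 < ℓ := by
      apply div_pos (lt_min hrpos one_pos) (by positivity)
    have hℓhalf : ℓ ≤ 1 / 2 := by
      have h1 : min r 1 ≤ 1 := min_le_right r 1
      rw [hℓdef, div_le_div_iff₀ (by positivity) (by norm_num : (0:ℝ) < 2)]
      nlinarith
    -- coordinates of x and z are in [0,1]
    have hx' : ∀ i, x i ∈ Set.Icc (0:ℝ) 1 := fun i => hx i (Set.mem_univ i)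
    have hz' : ∀ i, z i ∈ Set.Icc (0:ℝ) 1 := fun i => hz i (Set.mem_univ i)
    -- r ≤ √d
    have hrle : r ≤ Real.sqrt d := by
      rw [hrdef, EuclideanSpace.norm_eq]
      apply Real.sqrt_le_sqrt
      calc ∑ i, ‖(z - x) i‖ ^ 2 ≤ ∑ _i : Fin d, (1:ℝ) := by
            apply Finset.sum_le_sum
            intro i _
            have h2 : (z - x) i = z i - x i := rfl
            rw [h2, Real.norm_eq_abs, ← one_pow 2]
            apply pow_le_pow_left₀ (abs_nonneg _)
            rw [abs_le]
            constructor
            · have := (hx' i).2; have := (hz' i).1; linarith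
            · have := (hx' i).1; have := (hz' i).2; linarith
        _ = (d : ℝ) := by simp
    -- the anchor of the box
    set a : Fin d → ℝ := fun i => if x i ≤ 1/2 then x i else x i - ℓ with hadef
    set B : Set (EuclideanSpace ℝ (Fin d)) :=
      WithLp.ofLp ⁻¹' Set.univ.pi (fun i => Set.Icc (a i) (a i + ℓ)) with hBdef
    have hcoord : ∀ y ∈ B, ∀ i, |y i - x i| ≤ ℓ ∧ 0 ≤ y i ∧ y i ≤ 1 := by
      intro y hy i
      have hyi := hy i (Set.mem_univ i)
      simp only [Set.mem_Icc] at hyi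
      rw [hadef] at hyi
      by_cases hcase : x i ≤ 1/2
      · simp only [if_pos hcase] at hyi
        refine ⟨by rw [abs_le]; constructor <;> linarith [hyi.1, hyi.2], ?_, ?_⟩
        · linarith [(hx' i).1, hyi.1]
        · linarith [hyi.2, hℓhalf]
      · simp only [if_neg hcase] at hyi
        push_neg at hcase
        refine ⟨by rw [abs_le]; constructor <;> linarith [hyi.1, hyi.2], ?_, ?_⟩
        · linarith [hyi.1, hℓhalf]
        · linarith [hyi.2, (hx' i).2]
    have hBG : B ⊆ Gset x z := by
      intro y hy
      constructor
      · rw [Hset, Metric.mem_closedBall, dist_eq_norm, ← hrdef, EuclideanSpace.norm_eq]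
        have hsum : ∑ i, ‖(y - x) i‖ ^ 2 ≤ (d : ℝ) * ℓ ^ 2 := by
          calc ∑ i, ‖(y - x) i‖ ^ 2 ≤ ∑ _i : Fin d, ℓ ^ 2 := by
                apply Finset.sum_le_sum
                intro i _
                have h2 : (y - x) i = y i - x i := rfl
                rw [h2, Real.norm_eq_abs]
                apply pow_le_pow_left₀ (abs_nonneg _) ((hcoord y hy i).1)
            _ = (d : ℝ) * ℓ ^ 2 := by simp [mul_comm]
        have h4 : Real.sqrt (∑ i, ‖(y - x) i‖ ^ 2) ≤ Real.sqrt ((d:ℝ) * ℓ ^ 2) :=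
          Real.sqrt_le_sqrt hsum
        have h5 : Real.sqrt ((d:ℝ) * ℓ ^ 2) = Real.sqrt d * ℓ := by
          rw [Real.sqrt_mul (le_of_lt hd'), Real.sqrt_sq hℓpos.le]
        have h6 : Real.sqrt d * ℓ ≤ r := by
          rw [hℓdef]
          rw [mul_div_assoc']
          rw [div_le_iff₀ (by positivity)]
          have := min_le_left r 1
          nlinarith
        linarith
      · intro i _
        exact ⟨(hcoord y hy i).2.1, (hcoord y hy i).2.2⟩
    -- volume of the box
    have hvolB : volume B = ENNReal.ofReal ℓ ^ d := by
      have he : B = (MeasurableEquiv.toLp 2 (Fin d → ℝ)).symm ⁻¹'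
          (Set.univ.pi fun i => Set.Icc (a i) (a i + ℓ)) := rfl
      rw [he, (EuclideanSpace.volume_preserving_symm_measurableEquiv_toLp (Fin d)).measure_preimage
        (MeasurableSet.univ_pi (fun i => measurableSet_Icc)).nullMeasurableSet,
        volume_pi_pi]
      simp [Real.volume_Icc]
    -- V ≥ ℓ^d
    have hVlb : ℓ ^ d ≤ V := by
      have h1 : ENNReal.ofReal ℓ ^ d ≤ volume (Gset x z) := by
        rw [← hvolB]; exact measure_mono hBG
      have h2 : (ENNReal.ofReal ℓ ^ d).toReal = ℓ ^ d := by
        rw [ENNReal.toReal_pow, ENNReal.toReal_ofReal hℓpos.le]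
      rw [← h2, hVdef]
      exact ENNReal.toReal_mono hGfin.ne h1
    have hVpos : 0 < V := lt_of_lt_of_le (by positivity) hVlb
    -- ℓ ≥ r / (2d)
    have hℓlb : r / (2 * d) ≤ ℓ := by
      rw [hℓdef, div_le_div_iff₀ (by positivity) (by positivity)]
      have hmin : r / Real.sqrt d ≤ min r 1 := by
        rcases le_total r 1 with h | h
        · rw [min_eq_left h, div_le_iff₀ hsd0]; nlinarith
        · rw [min_eq_right h, div_le_one hsd0]; exact hrle
      have hsq : Real.sqrt d * Real.sqrt d = d := Real.mul_self_sqrt hd'.le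
      rw [div_le_iff₀ hsd0] at hmin
      nlinarith
    -- r ≤ 2d * V^(1/d)
    have hrub : r ≤ 2 * d * V ^ ((1:ℝ)/d) := by
      have h1 : (r / (2*d)) ^ d ≤ V := le_trans (pow_le_pow_left₀ (by positivity) hℓlb d) hVlb
      have h2 : ((r/(2*d)) ^ d : ℝ) ^ ((1:ℝ)/d) ≤ V ^ ((1:ℝ)/d) :=
        Real.rpow_le_rpow (by positivity) h1 (by positivity)
      have h3 : ((r/(2*d)) ^ d : ℝ) ^ ((1:ℝ)/d) = r/(2*d) := by
        rw [← Real.rpow_natCast (r/(2*d)) d, ← Real.rpow_mul (by positivity),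
          mul_one_div, div_self (ne_of_gt hd'), Real.rpow_one]
      rw [h3] at h2
      calc r = 2 * d * (r / (2*d)) := by field_simp
        _ ≤ 2 * d * V ^ ((1:ℝ)/d) := by
            apply mul_le_mul_of_nonneg_left h2 (by positivity)
    -- combine
    have hexp : V ^ ((1:ℝ)/d) * V = V ^ (((d:ℝ)+1)/d) := by
      rw [show (((d:ℝ)+1)/d) = (1:ℝ)/d + 1 by field_simp; ring,
        Real.rpow_add hVpos, Real.rpow_one]
    calc |∫ y in Gset x z, (y s - x s)| ≤ r * V := key1
      _ ≤ (2 * d * V ^ ((1:ℝ)/d)) * V := mul_le_mul_of_nonneg_right hrub hV0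
      _ = 2 * d * (V ^ ((1:ℝ)/d) * V) := by ring
      _ = 2 * d * V ^ (((d:ℝ)+1)/d) := by rw [hexp]
end

section
/- Define f : [0,1] → ℝ by f(u) := Σ_{i=0}^{d−1} (4d − 2i) [ C(d−1,i)(−2)^{d−1−i} / ((d−i) e_2^{(d−i)/d}) − C(d−1,i)(−2)^{d−1−i} / ((2d−i) e_2^{(d−i)/d}) ] · u^{(d−i)/d} for 0 < u < e_2/2^d, f(u) := 1 for e_2/2^d < u < 1, and f(0) = f(e_2/2^d) = f(1) := 0, where e_2 is the volume of the unit Euclidean ball in ℝ^d and C(d−1,i) denotes the binomial coefficient. Then f(u) ≥ 0 for all u ∈ [0,1], and there exists a constant c_3 > 0 depending only on d such that f(u) ≤ c_3 · u^{1/d} for all u ∈ [0,1]; in particular, on (e_2/2^d, 1) one has f(u) = 1 ≤ (2/e_2^{1/d}) u^{1/d}. -/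
open MeasureTheory Finset

/-- The volume `e₂` of the unit Euclidean ball in `ℝ^d`. -/
noncomputable def ballVol (d : ℕ) : ℝ :=
  (volume (Metric.closedBall (0 : EuclideanSpace ℝ (Fin d)) 1)).toReal

lemma nat_id (d i : ℕ) (h : i < d) : (d - i) * d.choose i = d * (d-1).choose i := by
  have hi : i ≤ d - 1 := Nat.le_sub_one_of_lt h
  have h1 := Nat.add_one_mul_choose_eq (d-1) (d-1-i)
  have e1 : d-1+1 = d := by omega
  have e2 : d-1-i+1 = d - i := by omega
  rw [e1, e2, Nat.choose_symm hi, Nat.choose_symm h.le] at h1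
  rw [mul_comm (d-i)]
  exact h1.symm

lemma sum_eq (d : ℕ) (hd : 0 < d) (E u : ℝ) (hE : 0 < E) (hu : 0 < u) :
    (∑ i ∈ Finset.range d,
      (4 * (d : ℝ) - 2 * i) *
        (((d - 1).choose i : ℝ) * (-2 : ℝ) ^ (d - 1 - i) /
            (((d : ℝ) - i) * E ^ (((d : ℝ) - i) / d)) -
          ((d - 1).choose i : ℝ) * (-2 : ℝ) ^ (d - 1 - i) /
            ((2 * (d : ℝ) - i) * E ^ (((d : ℝ) - i) / d))) *
        u ^ (((d : ℝ) - i) / d))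
    = 1 - (1 - 2 * (u / E) ^ (1 / (d : ℝ))) ^ d := by
  set x := (u / E) ^ (1 / (d : ℝ)) with hx
  have hxnn : (0:ℝ) ≤ u / E := (div_pos hu hE).le
  have hdr : (0:ℝ) < d := Nat.cast_pos.mpr hd
  have step : ∀ i ∈ Finset.range d,
      (4 * (d : ℝ) - 2 * i) *
        (((d - 1).choose i : ℝ) * (-2 : ℝ) ^ (d - 1 - i) /
            (((d : ℝ) - i) * E ^ (((d : ℝ) - i) / d)) -
          ((d - 1).choose i : ℝ) * (-2 : ℝ) ^ (d - 1 - i) /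
            ((2 * (d : ℝ) - i) * E ^ (((d : ℝ) - i) / d))) *
        u ^ (((d : ℝ) - i) / d)
      = -((d.choose i : ℝ) * (-2 * x) ^ (d - i)) := by
    intro i hi
    rw [Finset.mem_range] at hi
    have hdi : ((d - i : ℕ) : ℝ) = (d:ℝ) - i := by
      rw [Nat.cast_sub hi.le]
    have ha : (0:ℝ) < (d:ℝ) - i := by
      rw [← hdi]; exact_mod_cast Nat.sub_pos_of_lt hi
    have hb : (0:ℝ) < 2 * (d:ℝ) - i := by
      have : (i:ℝ) < d := by exact_mod_cast hi
      linarith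
    have hEp : (0:ℝ) < E ^ (((d : ℝ) - i) / d) := Real.rpow_pos_of_pos hE _
    have hxp : x ^ (d - i) = u ^ (((d : ℝ) - i) / d) / E ^ (((d : ℝ) - i) / d) := by
      rw [← Real.div_rpow hu.le hE.le, hx, ← Real.rpow_natCast ((u/E) ^ (1/(d:ℝ))) (d - i),
        ← Real.rpow_mul hxnn, hdi]
      congr 1
      field_simp
    have hc : ((d:ℝ) - i) * (d.choose i : ℝ) = (d:ℝ) * ((d-1).choose i : ℝ) := by
      rw [← hdi]; exact_mod_cast nat_id d i hi
    have hsgn : (-2:ℝ) ^ (d - i) = (-2:ℝ) ^ (d - 1 - i) * -2 := by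
      have he : d - i = (d - 1 - i) + 1 := by omega
      rw [he, pow_succ]
    rw [mul_pow, hxp, hsgn]
    have hD : (d.choose i : ℝ) = d * ((d-1).choose i : ℝ) / ((d:ℝ) - i) := by
      field_simp; linarith
    have hb3 : 2*(d:ℝ) - i = ((d:ℝ)-i) + d := by ring
    have hb4 : ((d:ℝ)-i) + d ≠ 0 := by linarith
    rw [hD, hb3]; field_simp [hb4, ha.ne', hEp.ne']; ring
  rw [Finset.sum_congr rfl step, Finset.sum_neg_distrib]
  have hb := add_pow (1:ℝ) (-2*x) d
  rw [Finset.sum_range_succ] at hb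
  simp only [one_pow, Nat.sub_self, pow_zero, Nat.choose_self, Nat.cast_one, one_mul,
    mul_one] at hb
  have h2 : ∑ i ∈ Finset.range d, (d.choose i : ℝ) * (-2*x) ^ (d - i)
      = (1 + -2*x) ^ d - 1 := by
    rw [eq_sub_iff_add_eq, hb]
    exact congrArg (· + 1) (Finset.sum_congr rfl fun i _ => mul_comm _ _)
  rw [h2]
  ring

/-- let `f : [0,1] → ℝ` be defined piecewise by the displayed sum on
`(0, e₂/2^d)`, by `1` on `(e₂/2^d, 1)`, and by `0` at `0`, `e₂/2^d`, `1`. Then `f ≥ 0` on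
`[0,1]`, and there is `c₃ > 0` depending only on `d` with `f(u) ≤ c₃ u^{1/d}` on `[0,1]`;
in particular on `(e₂/2^d, 1)` one has `f(u) = 1 ≤ (2/e₂^{1/d}) u^{1/d}`. -/
theorem density_bound (d : ℕ) (hd : 0 < d) (f : ℝ → ℝ)
    (hf₁ : ∀ u : ℝ, 0 < u → u < ballVol d / 2 ^ d →
      f u = ∑ i ∈ Finset.range d,
        (4 * (d : ℝ) - 2 * i) *
          (((d - 1).choose i : ℝ) * (-2 : ℝ) ^ (d - 1 - i) /
              (((d : ℝ) - i) * ballVol d ^ (((d : ℝ) - i) / d)) -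
            ((d - 1).choose i : ℝ) * (-2 : ℝ) ^ (d - 1 - i) /
              ((2 * (d : ℝ) - i) * ballVol d ^ (((d : ℝ) - i) / d))) *
          u ^ (((d : ℝ) - i) / d))
    (hf₂ : ∀ u : ℝ, ballVol d / 2 ^ d < u → u < 1 → f u = 1)
    (hf₃ : f 0 = 0) (hf₄ : f (ballVol d / 2 ^ d) = 0) (hf₅ : f 1 = 0) :
    (∀ u ∈ Set.Icc (0 : ℝ) 1, 0 ≤ f u) ∧
      (∃ c₃ : ℝ, 0 < c₃ ∧ ∀ u ∈ Set.Icc (0 : ℝ) 1, f u ≤ c₃ * u ^ (1 / (d : ℝ))) ∧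
      (∀ u ∈ Set.Ioo (ballVol d / 2 ^ d) (1 : ℝ),
        f u = 1 ∧ f u ≤ 2 / ballVol d ^ (1 / (d : ℝ)) * u ^ (1 / (d : ℝ))) := by
  have hdr : (0:ℝ) < d := Nat.cast_pos.mpr hd
  have hdr1 : (1:ℝ) ≤ d := by exact_mod_cast hd
  have hE : 0 < ballVol d :=
    ENNReal.toReal_pos (Metric.measure_closedBall_pos volume _ one_pos).ne'
      measure_closedBall_lt_top.ne
  set E := ballVol d with hEdef
  have hEp : (0:ℝ) < E ^ (1/(d:ℝ)) := Real.rpow_pos_of_pos hE _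
  have h2d : ((2:ℝ)^d) ^ (1/(d:ℝ)) = 2 := by
    rw [← Real.rpow_natCast 2 d, ← Real.rpow_mul (by norm_num), mul_one_div_cancel hdr.ne',
      Real.rpow_one]
  have hhalf : (E / 2^d) ^ (1/(d:ℝ)) = E ^ (1/(d:ℝ)) / 2 := by
    rw [Real.div_rpow hE.le (by positivity), h2d]
  -- the key estimate on the lower interval
  have key : ∀ u : ℝ, 0 < u → u < E / 2^d →
      0 ≤ f u ∧ f u ≤ 2 * d / E ^ (1/(d:ℝ)) * u ^ (1/(d:ℝ)) := by
    intro u hu hu2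
    have hfu : f u = 1 - (1 - 2 * (u / E) ^ (1 / (d : ℝ))) ^ d := by
      rw [hf₁ u hu hu2]; exact sum_eq d hd E u hE hu
    set x := (u / E) ^ (1 / (d : ℝ)) with hx
    have hx0 : 0 < x := Real.rpow_pos_of_pos (div_pos hu hE) _
    have hxlt : x < 1/2 := by
      have h2pow : (0:ℝ) < 2^d := by positivity
      have h1 : u / E < 1 / 2^d := by
        rw [div_lt_div_iff₀ hE h2pow]
        have := (lt_div_iff₀ h2pow).mp hu2
        linarith
      have h2 : ((1:ℝ) / 2^d) ^ (1/(d:ℝ)) = 1/2 := by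
        rw [Real.div_rpow (by norm_num) h2pow.le, h2d, Real.one_rpow]
      calc x < ((1:ℝ)/2^d) ^ (1/(d:ℝ)) :=
            Real.rpow_lt_rpow (div_pos hu hE).le h1 (by positivity)
        _ = 1/2 := h2
    constructor
    · rw [hfu]
      have h1 : (1 - 2*x) ^ d ≤ 1 :=
        pow_le_one₀ (by linarith) (by linarith)
      linarith
    · rw [hfu]
      have hbern : 1 + (d:ℝ) * (-(2*x)) ≤ (1 + -(2*x)) ^ d :=
        one_add_mul_le_pow (by linarith) d
      have h3 : 1 - (1 - 2*x) ^ d ≤ 2 * d * x := by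
        have : (1 + -(2*x)) ^ d = (1 - 2*x)^d := by ring_nf
        rw [this] at hbern; linarith
      calc 1 - (1 - 2*x) ^ d ≤ 2 * d * x := h3
        _ = 2 * d / E ^ (1/(d:ℝ)) * u ^ (1/(d:ℝ)) := by
            rw [hx, Real.div_rpow hu.le hE.le]; ring
  have hupper : ∀ u : ℝ, E/2^d < u → u < 1 → 1 ≤ 2 / E ^ (1/(d:ℝ)) * u ^ (1/(d:ℝ)) := by
    intro u h1 h2
    have h0 : (0:ℝ) ≤ E/2^d := by positivity
    have hru : E^(1/(d:ℝ))/2 ≤ u ^ (1/(d:ℝ)) := by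
      rw [← hhalf]; exact Real.rpow_le_rpow h0 h1.le (by positivity)
    calc (1:ℝ) = 2 / E ^ (1/(d:ℝ)) * (E^(1/(d:ℝ))/2) := by field_simp
      _ ≤ _ := mul_le_mul_of_nonneg_left hru (by positivity)
  refine ⟨?_, ⟨2*(d:ℝ)/E^(1/(d:ℝ)), by positivity, ?_⟩, ?_⟩
  · rintro u ⟨hu0, hu1⟩
    rcases eq_or_lt_of_le hu0 with h0 | h0
    · rw [← h0, hf₃]
    rcases eq_or_lt_of_le hu1 with h1 | h1
    · rw [h1, hf₅]
    rcases lt_trichotomy u (E/2^d) with h | h | h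
    · exact (key u h0 h).1
    · rw [h, hf₄]
    · rw [hf₂ u h h1]; norm_num
  · rintro u ⟨hu0, hu1⟩
    have hrnn : 0 ≤ u ^ (1/(d:ℝ)) := Real.rpow_nonneg hu0 _
    rcases eq_or_lt_of_le hu0 with h0 | h0
    · rw [← h0, hf₃]; positivity
    rcases eq_or_lt_of_le hu1 with h1 | h1
    · rw [h1, hf₅]; positivity
    rcases lt_trichotomy u (E/2^d) with h | h | h
    · exact (key u h0 h).2
    · rw [h, hf₄]; positivity
    · rw [hf₂ u h h1]
      calc (1:ℝ) ≤ 2/E^(1/(d:ℝ)) * u^(1/(d:ℝ)) := hupper u h h1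
        _ ≤ 2*(d:ℝ)/E^(1/(d:ℝ)) * u^(1/(d:ℝ)) := by
          apply mul_le_mul_of_nonneg_right ?_ hrnn
          gcongr
          linarith
  · rintro u ⟨h1, h2⟩
    exact ⟨hf₂ u h1 h2, by rw [hf₂ u h1 h2]; exact hupper u h1 h2⟩
end
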